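/- arXiv:2409.01431 — 2 statements merged into one kernel-verified Lean document; each statement's English description precedes it below -/
import Mathlib

section
/- Let ℓ ≥ r ≥ 1 and k ≥ 1 be integers. Then for all real x > 2, Φ(C(ℓ+1, r−1, k), x) > Φ(C(ℓ, r, k), x), where C(ℓ,r,k) is the caterpillar obtained by attaching k leaves at the ℓ-th vertex of a path on ℓ+r+1 vertices. -/
open Classical
attribute [local instance] Classical.propDecidable

noncomputable section

/-- The list of eigenvalues of the adjacency matrix of `G` (with multiplicity),
sorted in ascending order. -/
def eigList {V : Type*} [Fintype V] [DecidableEq V] (G : SimpleGraph V) : List ℝ :=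
  (Finset.univ.val.map (Matrix.IsHermitian.eigenvalues
    (by
      rw [Matrix.IsHermitian]
      ext i j
      simp [Matrix.conjTranspose_apply, G.adj_comm j i] : (G.adjMatrix ℝ).IsHermitian))).sort (· ≤ ·)

/-- `lam G k` is the `k`-th largest eigenvalue (1-indexed, with multiplicity)
of the adjacency matrix of `G`; so `lam G 1 = λ₁(G)`, `lam G 2 = λ₂(G)`, etc. -/
def lam {V : Type*} [Fintype V] [DecidableEq V] (G : SimpleGraph V) (k : ℕ) : ℝ :=
  (eigList G).getD (Fintype.card V - k) 0

/-- `Phi G x = det (x I - A(G))`: the characteristic polynomial of the adjacency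
matrix of `G`, evaluated at `x`. -/
def Phi {V : Type*} [Fintype V] [DecidableEq V] (G : SimpleGraph V) (x : ℝ) : ℝ :=
  ((G.adjMatrix ℝ).charpoly).eval x

/-- The graph `G - a` obtained by deleting the vertex `a`. -/
def delVert {V : Type*} (G : SimpleGraph V) (a : V) : SimpleGraph {v : V // v ≠ a} :=
  G.induce {v : V | v ≠ a}

/-- The path graph `P_m` on `m` vertices `0 - 1 - ⋯ - (m-1)`. -/
def pathG (m : ℕ) : SimpleGraph (Fin m) :=
  SimpleGraph.fromRel (fun i j => i.val + 1 = j.val)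

/-- The caterpillar `C(ℓ,r,k)`: the path `v_0 v_1 ⋯ v_{ℓ+r}` together with `k`
pendant leaves attached at the vertex `v_ℓ`. -/
def caterpillar (l r k : ℕ) : SimpleGraph (Fin (l + r + k + 1)) :=
  SimpleGraph.fromRel (fun i j =>
    (i.val + 1 = j.val ∧ j.val ≤ l + r) ∨ (i.val = l ∧ l + r < j.val))

/-- The star `K_{1,n-1}`: vertex `0` adjacent to all other vertices. -/
def starG (n : ℕ) : SimpleGraph (Fin n) :=
  SimpleGraph.fromRel (fun i _ => i.val = 0)

/-- The double star `T(n-3,1)`: adjacent vertices `u = 0`, `v = 1`, where `u` has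
the `n - 3` pendant leaves `2, …, n-2` and `v` has the single pendant leaf `n-1`. -/
def doubleStar (n : ℕ) : SimpleGraph (Fin n) :=
  SimpleGraph.fromRel (fun i j =>
    (i.val = 0 ∧ 1 ≤ j.val ∧ j.val ≤ n - 2) ∨ (i.val = 1 ∧ j.val = n - 1))

/-- The caterpillar `T((n-3)/2, 0, (n-3)/2)`: a path `0 - 1 - 2` with `(n-3)/2`
pendant leaves attached at `0` and `(n-3)/2` pendant leaves attached at `2`. -/
def doubleBroom (n : ℕ) : SimpleGraph (Fin n) :=
  SimpleGraph.fromRel (fun i j =>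
    (i.val = 0 ∧ j.val = 1) ∨ (i.val = 1 ∧ j.val = 2) ∨
    (i.val = 0 ∧ 3 ≤ j.val ∧ j.val < 3 + (n - 3) / 2) ∨
    (i.val = 2 ∧ 3 + (n - 3) / 2 ≤ j.val))

/-- `(G1,a) ∘ (G2,b)`: the disjoint union of `G1` and `G2` together with the edge `ab`. -/
def connectRoots {V1 V2 : Type*} (G1 : SimpleGraph V1) (G2 : SimpleGraph V2) (a : V1) (b : V2) :
    SimpleGraph (V1 ⊕ V2) where
  Adj x y := match x, y with
    | .inl u, .inl v => G1.Adj u v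
    | .inr u, .inr v => G2.Adj u v
    | .inl u, .inr v => u = a ∧ v = b
    | .inr u, .inl v => u = b ∧ v = a
  symm := by
    constructor
    rintro (u | u) (v | v) h
    · exact G1.adj_symm h
    · exact ⟨h.2, h.1⟩
    · exact ⟨h.2, h.1⟩
    · exact G2.adj_symm h
  loopless := by
    constructor
    rintro (u | u) h
    · exact G1.irrefl h
    · exact G2.irrefl h

/-- `(G1,a) ∘ v ∘ (G2,b)`: the disjoint union of `G1` and `G2` together with a new
vertex (`none`) joined to exactly `a` and `b`. -/
def connectViaVertex {V1 V2 : Type*} (G1 : SimpleGraph V1) (G2 : SimpleGraph V2)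
    (a : V1) (b : V2) : SimpleGraph (Option (V1 ⊕ V2)) where
  Adj x y := match x, y with
    | some (.inl u), some (.inl v) => G1.Adj u v
    | some (.inr u), some (.inr v) => G2.Adj u v
    | none, some (.inl u) => u = a
    | some (.inl u), none => u = a
    | none, some (.inr u) => u = b
    | some (.inr u), none => u = b
    | _, _ => False
  symm := by
    constructor
    rintro (_ | (u | u)) (_ | (v | v)) h
    all_goals first
      | exact h.elim
      | exact h
      | exact G1.adj_symm h
      | exact G2.adj_symm h
  loopless := by
    constructor
    rintro (_ | (u | u)) h
    · exact h.elim
    · exact G1.irrefl h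
    · exact G2.irrefl h

namespace CatAux

lemma phi_eq {V : Type*} [Fintype V] [DecidableEq V] (G : SimpleGraph V) (x : ℝ) :
    Phi G x = (x • (1 : Matrix V V ℝ) - G.adjMatrix ℝ).det := by
  rw [Phi, Matrix.charpoly, ← Polynomial.coe_evalRingHom, RingHom.map_det]
  congr 1
  ext i j
  by_cases h : i = j
  · subst h
    simp [Matrix.charmatrix_apply_eq, Matrix.one_apply]
  · rw [RingHom.mapMatrix_apply, Matrix.map_apply, Matrix.charmatrix_apply_ne _ _ _ h]
    simp [Matrix.sub_apply, Matrix.one_apply_ne h]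
    split_ifs <;> simp

lemma ifp (x : ℝ) {p q p' q' : Prop} [Decidable p] [Decidable q] [Decidable p'] [Decidable q']
    (h1 : p ↔ p') (h2 : q ↔ q') :
    (if p then x else if q then (-1:ℝ) else 0) = if p' then x else if q' then -1 else 0 :=
  if_congr h1 rfl (if_congr h2 rfl rfl)

lemma cat_apply (a b c : ℕ) (x : ℝ) (u v : Fin (a+b+c+1)) :
    (x • (1 : Matrix (Fin (a+b+c+1)) (Fin (a+b+c+1)) ℝ) - (caterpillar a b c).adjMatrix ℝ) u v =
    if (u:ℕ) = v then x else
      if ((u:ℕ)+1 = v ∧ (v:ℕ) ≤ a+b) ∨ ((v:ℕ)+1 = u ∧ (u:ℕ) ≤ a+b)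
        ∨ ((u:ℕ) = a ∧ a+b < v) ∨ ((v:ℕ) = a ∧ a+b < u) then -1 else 0 := by
  have hne : (u = v) ↔ ((u:ℕ) = v) := Fin.val_inj.symm
  by_cases h : u = v
  · subst h
    simp [Matrix.one_apply, SimpleGraph.irrefl]
  · rw [if_neg (fun hc => h (Fin.val_inj.mp hc))]
    simp only [Matrix.sub_apply, Matrix.smul_apply, Matrix.one_apply_ne h, smul_zero,
      SimpleGraph.adjMatrix_apply, zero_sub]
    rw [caterpillar]
    rw [SimpleGraph.fromRel_adj]
    have hiff : (u ≠ v ∧ ((((u:ℕ)+1 = v ∧ (v:ℕ) ≤ a+b) ∨ ((u:ℕ) = a ∧ a+b < v)) ∨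
        (((v:ℕ)+1 = u ∧ (u:ℕ) ≤ a+b) ∨ ((v:ℕ) = a ∧ a+b < u)))) ↔
        (((u:ℕ)+1 = v ∧ (v:ℕ) ≤ a+b) ∨ ((v:ℕ)+1 = u ∧ (u:ℕ) ≤ a+b)
          ∨ ((u:ℕ) = a ∧ a+b < v) ∨ ((v:ℕ) = a ∧ a+b < u)) := by
      constructor
      · rintro ⟨-, h2⟩; tauto
      · intro h2; exact ⟨h, by tauto⟩
    simp only [hiff]
    split_ifs <;> norm_num


def pmat (x : ℝ) (m : ℕ) : Matrix (Fin m) (Fin m) ℝ := Matrix.of fun i j =>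
  if (i:ℕ) = j then x else if (i:ℕ)+1 = j ∨ (j:ℕ)+1 = i then -1 else 0

def p (x : ℝ) (m : ℕ) : ℝ := (pmat x m).det

lemma p_zero (x : ℝ) : p x 0 = 1 := Matrix.det_fin_zero

lemma p_one (x : ℝ) : p x 1 = x := by
  rw [p, Matrix.det_fin_one]; simp [pmat]

lemma ifc (x : ℝ) {a b c d : ℕ} (h1 : (a = b) ↔ (c = d))
    (h2 : (a+1 = b ∨ b+1 = a) ↔ (c+1 = d ∨ d+1 = c)) :
    (if a = b then x else if a+1 = b ∨ b+1 = a then (-1:ℝ) else 0)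
      = (if c = d then x else if c+1 = d ∨ d+1 = c then -1 else 0) := by
  by_cases h : a = b
  · rw [if_pos h, if_pos (h1.mp h)]
  · rw [if_neg h, if_neg (fun hc => h (h1.mpr hc))]
    by_cases h' : a+1 = b ∨ b+1 = a
    · rw [if_pos h', if_pos (h2.mp h')]
    · rw [if_neg h', if_neg (fun hc => h' (h2.mpr hc))]

lemma pmat_succ_succ (x : ℝ) (m : ℕ) :
    (pmat x (m+1)).submatrix Fin.succ Fin.succ = pmat x m := by
  ext i j
  simp only [Matrix.submatrix_apply, pmat, Matrix.of_apply, Fin.val_succ]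
  exact ifc x (by omega) (by omega)


lemma succAbove_one_zero (m : ℕ) : ((1 : Fin (m+2)).succAbove 0 : ℕ) = 0 := by
  simp [Fin.succAbove, Fin.lt_def]

lemma succAbove_one_succ (m : ℕ) (j : Fin m) :
    ((1 : Fin (m+2)).succAbove j.succ : ℕ) = (j:ℕ) + 2 := by
  simp only [Fin.succAbove, Fin.lt_def]
  have : ¬ ((j.succ.castSucc : ℕ) < ((1 : Fin (m+2)) : ℕ)) := by
    simp [Fin.val_succ]
  rw [if_neg this]
  simp [Fin.val_succ]

lemma p_rec (x : ℝ) (m : ℕ) : p x (m+2) = x * p x (m+1) - p x m := by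
  have hN : ((pmat x (m+2)).submatrix Fin.succ ((1 : Fin (m+2)).succAbove)).det = - p x m := by
    set N := (pmat x (m+2)).submatrix Fin.succ ((1 : Fin (m+2)).succAbove) with hNdef
    rw [Matrix.det_succ_column_zero]
    rw [Fin.sum_univ_succ]
    have hN00 : N 0 0 = -1 := by
      simp only [hNdef, Matrix.submatrix_apply, pmat, Matrix.of_apply]
      rw [show (((1 : Fin (m+2)).succAbove 0 : ℕ)) = 0 from succAbove_one_zero m]
      norm_num
    have htail : ∀ i : Fin m, N i.succ 0 = 0 := by
      intro i
      simp only [hNdef, Matrix.submatrix_apply, pmat, Matrix.of_apply]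
      rw [show (((1 : Fin (m+2)).succAbove 0 : ℕ)) = 0 from succAbove_one_zero m]
      simp only [Fin.val_succ]
      have h1 : ¬ ((i:ℕ)+1+1 = 0) := by omega
      have h2 : ¬ ((i:ℕ)+1+1 = 0 + 1 ∨ (0:ℕ)+1 = (i:ℕ)+1+1) := by omega
      rw [if_neg (by omega : ¬ ((i:ℕ)+1+1 = 0)), if_neg (by omega : ¬ ((i:ℕ)+1+1+1 = 0 ∨ (0:ℕ)+1 = (i:ℕ)+1+1))]
    have hsub : N.submatrix ((0 : Fin (m+1)).succAbove) Fin.succ = pmat x m := by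
      ext i j
      simp only [Matrix.submatrix_apply, hNdef, Fin.succAbove_zero, pmat, Matrix.of_apply]
      rw [show (((1 : Fin (m+2)).succAbove j.succ : ℕ)) = (j:ℕ)+2 from succAbove_one_succ m j]
      simp only [Fin.val_succ]
      exact ifc x (by omega) (by omega)
    rw [hN00, hsub]
    have : ∀ i : Fin m, (-1:ℝ)^((i.succ : ℕ)) * N i.succ 0 *
        (N.submatrix (Fin.succAbove i.succ) Fin.succ).det = 0 := by
      intro i; rw [htail i]; ring
    rw [Finset.sum_congr rfl (fun i _ => this i), Finset.sum_const, smul_zero]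
    simp [p]
  rw [p, show m+2 = (m+1)+1 from rfl, Matrix.det_succ_row_zero]
  rw [Fin.sum_univ_succ, Fin.sum_univ_succ]
  have h0 : pmat x (m+1+1) 0 0 = x := by simp [pmat]
  have h1 : pmat x (m+1+1) 0 (Fin.succ 0) = -1 := by
    simp [pmat]
  have htail : ∀ j : Fin m, pmat x (m+1+1) 0 j.succ.succ = 0 := by
    intro j
    simp only [pmat, Matrix.of_apply, Fin.val_succ, Fin.val_zero]
    split_ifs <;> simp_all
  rw [h0, h1]
  have hz : ∀ j : Fin m, (-1:ℝ)^((j.succ.succ : ℕ)) * pmat x (m+1+1) 0 j.succ.succ *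
      ((pmat x (m+1+1)).submatrix Fin.succ (Fin.succAbove j.succ.succ)).det = 0 := by
    intro j; rw [htail j]; ring
  rw [Finset.sum_congr rfl (fun j _ => hz j), Finset.sum_const, smul_zero]
  have e0 : (pmat x (m+1+1)).submatrix Fin.succ ((0 : Fin (m+2)).succAbove) = pmat x (m+1) := by
    rw [Fin.succAbove_zero]; exact pmat_succ_succ x (m+1)
  rw [e0]
  have e1 : Fin.succ (0 : Fin (m+1)) = (1 : Fin (m+2)) := rfl
  rw [e1, hN]
  simp [p]
  ring

lemma p_pos_mono {x : ℝ} (hx : 2 < x) : ∀ m, 0 < p x m ∧ p x m < p x (m+1) := by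
  intro m
  induction m using Nat.twoStepInduction with
  | zero => refine ⟨by rw [p_zero]; norm_num, ?_⟩
            rw [p_zero, p_one]; linarith
  | one => refine ⟨by rw [p_one]; linarith, ?_⟩
           rw [p_one, p_rec, p_zero, p_one]; nlinarith
  | more m ih ih2 =>
    obtain ⟨h1, h2⟩ := ih
    obtain ⟨h0, h1'⟩ := ih2
    constructor
    · linarith
    · rw [p_rec x (m+1)]
      nlinarith

lemma p_pos {x : ℝ} (hx : 2 < x) (m : ℕ) : 0 < p x m := (p_pos_mono hx m).1

lemma p_prod {x : ℝ} : ∀ b a : ℕ, 1 ≤ b → b ≤ a →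
    p x a * p x b - p x (a+1) * p x (b-1) = p x (a-b) := by
  intro b
  induction b with
  | zero => intro a h; omega
  | succ b ih =>
    intro a hb ha
    rcases Nat.eq_zero_or_pos b with hb0 | hb1
    · subst hb0
      obtain ⟨c, rfl⟩ : ∃ c, a = c + 1 := ⟨a - 1, by omega⟩
      rw [p_one, p_zero, p_rec]
      simp [Nat.add_sub_cancel]
      ring
    · obtain ⟨c, rfl⟩ : ∃ c, a = c + 1 := ⟨a - 1, by omega⟩
      obtain ⟨d, rfl⟩ : ∃ d, b = d + 1 := ⟨b - 1, by omega⟩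
      have key : p x (c+1) * p x (d+2) - p x (c+2) * p x (d+1)
          = p x c * p x (d+1) - p x (c+1) * p x d := by
        rw [p_rec x d, p_rec x c]; ring
      have := ih c (by omega) (by omega)
      rw [show c + 1 + 1 = c + 2 from rfl, show d + 1 + 1 = d + 2 from rfl] at *
      rw [show d + 2 - 1 = d + 1 from rfl, key]
      rw [show d + 1 - 1 = d from rfl] at this
      rw [this]
      congr 1
      omega

lemma succAbove_val {n : ℕ} (pp : Fin (n+1)) (i : Fin n) :
    ((pp.succAbove i : ℕ)) = if (i:ℕ) < (pp:ℕ) then (i:ℕ) else (i:ℕ)+1 := by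
  rw [Fin.succAbove]
  rcases lt_or_ge (i:ℕ) (pp:ℕ) with h | h
  · rw [if_pos (by simpa [Fin.lt_def] using h), if_pos h, Fin.coe_castSucc]
  · rw [if_neg (by simp [Fin.lt_def, not_lt]; omega), if_neg (by omega), Fin.val_succ]

def bm (a b c : ℕ) : Matrix (Fin (a+b+1)) (Fin c) ℝ :=
  Matrix.of fun i _ => if (i:ℕ) = a then (-1:ℝ) else 0

def catEquiv (a b c : ℕ) : Fin (a+b+1) ⊕ Fin c ≃ Fin (a+b+c+1) :=
  finSumFinEquiv.trans (finCongr (by omega))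

lemma catEquiv_inl (a b c : ℕ) (i : Fin (a+b+1)) :
    ((catEquiv a b c (Sum.inl i) : Fin (a+b+c+1)) : ℕ) = (i:ℕ) := by
  simp [catEquiv, finSumFinEquiv]

lemma catEquiv_inr (a b c : ℕ) (j : Fin c) :
    ((catEquiv a b c (Sum.inr j) : Fin (a+b+c+1)) : ℕ) = a+b+1+(j:ℕ) := by
  simp [catEquiv, finSumFinEquiv]

lemma cat_block (a b c : ℕ) (x : ℝ) :
    (x • (1 : Matrix (Fin (a+b+c+1)) (Fin (a+b+c+1)) ℝ)
        - (caterpillar a b c).adjMatrix ℝ).submatrix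
      (catEquiv a b c) (catEquiv a b c)
      = Matrix.fromBlocks (pmat x (a+b+1)) (bm a b c) (bm a b c).transpose
          (x • (1 : Matrix (Fin c) (Fin c) ℝ)) := by
  ext u v
  rcases u with i | j <;> rcases v with i' | j'
  · have hi := i.isLt; have hi' := i'.isLt
    simp only [Matrix.submatrix_apply, cat_apply, Matrix.fromBlocks_apply₁₁, pmat,
      Matrix.of_apply]
    rw [catEquiv_inl a b c i, catEquiv_inl a b c i']
    split_ifs <;> first | rfl | (exfalso; omega)
  · have hi := i.isLt; have hj' := j'.isLt
    simp only [Matrix.submatrix_apply, cat_apply, Matrix.fromBlocks_apply₁₂, bm,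
      Matrix.of_apply]
    rw [catEquiv_inl a b c i, catEquiv_inr a b c j']
    split_ifs <;> first | rfl | (exfalso; omega)
  · have hj := j.isLt; have hi' := i'.isLt
    simp only [Matrix.submatrix_apply, cat_apply, Matrix.fromBlocks_apply₂₁, bm,
      Matrix.of_apply, Matrix.transpose_apply]
    rw [catEquiv_inr a b c j, catEquiv_inl a b c i']
    split_ifs <;> first | rfl | (exfalso; omega)
  · have hj := j.isLt; have hj' := j'.isLt
    simp only [Matrix.submatrix_apply, cat_apply, Matrix.fromBlocks_apply₂₂,
      Matrix.smul_apply, Matrix.one_apply]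
    rw [catEquiv_inr a b c j, catEquiv_inr a b c j']
    by_cases hjj : (j:ℕ) = (j':ℕ)
    · have hj2 : j = j' := Fin.val_inj.mp hjj
      subst hj2
      rw [if_pos rfl, if_pos rfl]
      simp
    · rw [if_neg (fun hc : a+b+1+(j:ℕ) = a+b+1+(j':ℕ) => hjj (by omega)),
          if_neg (fun hc : j = j' => hjj (congrArg Fin.val hc))]
      split_ifs with h
      · exfalso; omega
      · simp

def aFin (a b : ℕ) : Fin (a+b+1) := ⟨a, by omega⟩

lemma det_Q (a b : ℕ) (x : ℝ) :
    ((pmat x (a+b+1)).updateRow (aFin a b) (Pi.single (aFin a b) 1)).det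
      = p x a * p x b := by
  set Q := (pmat x (a+b+1)).updateRow (aFin a b) (Pi.single (aFin a b) 1) with hQ
  rw [Matrix.det_succ_row Q (aFin a b)]
  rw [Finset.sum_eq_single (aFin a b)]
  · rw [hQ, Matrix.updateRow_self, Pi.single_eq_same]
    have hsign : (-1:ℝ)^(((aFin a b):ℕ) + ((aFin a b):ℕ)) = 1 := by
      rw [← two_mul, pow_mul]; norm_num
    rw [hsign, one_mul, one_mul]
    have hR : (Q.submatrix (aFin a b).succAbove (aFin a b).succAbove).submatrix
        finSumFinEquiv finSumFinEquiv
        = Matrix.fromBlocks (pmat x a) 0 0 (pmat x b) := by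
      ext u v
      have hrow : ∀ w : Fin (a+b), Q ((aFin a b).succAbove w) = pmat x (a+b+1) ((aFin a b).succAbove w) :=
        fun w => Matrix.updateRow_ne (Fin.succAbove_ne _ w)
      have hvl : ∀ i : Fin a, (((aFin a b).succAbove (finSumFinEquiv (Sum.inl i)) : Fin (a+b+1)) : ℕ) = (i:ℕ) := by
        intro i
        have h1 : ((finSumFinEquiv (Sum.inl i) : Fin (a+b)) : ℕ) = (i:ℕ) := by
          simp [finSumFinEquiv]
        rw [succAbove_val, h1, if_pos (by simpa [aFin] using i.isLt)]
      have hvr : ∀ j : Fin b, (((aFin a b).succAbove (finSumFinEquiv (Sum.inr j)) : Fin (a+b+1)) : ℕ) = a+(j:ℕ)+1 := by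
        intro j
        have h1 : ((finSumFinEquiv (Sum.inr j) : Fin (a+b)) : ℕ) = a+(j:ℕ) := by
          simp [finSumFinEquiv]
        rw [succAbove_val, h1, if_neg (by simp [aFin])]
      rcases u with i | j <;> rcases v with i' | j'
      · have hi := i.isLt; have hi' := i'.isLt
        simp only [Matrix.submatrix_apply, hrow, pmat, Matrix.of_apply,
          Matrix.fromBlocks_apply₁₁, hvl]
        all_goals split_ifs <;> first | rfl | (exfalso; omega)
      · have hi := i.isLt; have hj' := j'.isLt
        simp only [Matrix.submatrix_apply, hrow, pmat, Matrix.of_apply,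
          Matrix.fromBlocks_apply₁₂, hvl, hvr, Matrix.zero_apply]
        all_goals split_ifs <;> first | rfl | (exfalso; omega)
      · have hj := j.isLt; have hi' := i'.isLt
        simp only [Matrix.submatrix_apply, hrow, pmat, Matrix.of_apply,
          Matrix.fromBlocks_apply₂₁, hvl, hvr, Matrix.zero_apply]
        all_goals split_ifs <;> first | rfl | (exfalso; omega)
      · have hj := j.isLt; have hj' := j'.isLt
        simp only [Matrix.submatrix_apply, hrow, pmat, Matrix.of_apply,
          Matrix.fromBlocks_apply₂₂, hvr]
        all_goals split_ifs <;> first | rfl | (exfalso; omega)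
    calc (Q.submatrix (aFin a b).succAbove (aFin a b).succAbove).det
        = ((Q.submatrix (aFin a b).succAbove (aFin a b).succAbove).submatrix
            finSumFinEquiv finSumFinEquiv).det :=
          (Matrix.det_submatrix_equiv_self _ _).symm
      _ = (Matrix.fromBlocks (pmat x a) 0 0 (pmat x b)).det := by rw [hR]
      _ = p x a * p x b := by rw [Matrix.det_fromBlocks_zero₂₁]; rfl
  · intro j _ hj
    rw [hQ, Matrix.updateRow_self, Pi.single_eq_of_ne hj]
    ring
  · intro h
    exact absurd (Finset.mem_univ _) h

lemma phi_cat (a b c : ℕ) (x : ℝ) (hx : x ≠ 0) :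
    Phi (caterpillar a b c) x
      = x^c * (p x (a+b+1) - ((c:ℝ) / x) * (p x a * p x b)) := by
  rw [phi_eq]
  rw [← Matrix.det_submatrix_equiv_self (catEquiv a b c), cat_block]
  haveI hD : Invertible (x • (1 : Matrix (Fin c) (Fin c) ℝ)) :=
    ⟨x⁻¹ • 1,
     by rw [Matrix.smul_mul, Matrix.one_mul, smul_smul, inv_mul_cancel₀ hx, one_smul],
     by rw [Matrix.smul_mul, Matrix.one_mul, smul_smul, mul_inv_cancel₀ hx, one_smul]⟩
  rw [Matrix.det_fromBlocks₂₂]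
  have hinv : ⅟(x • (1 : Matrix (Fin c) (Fin c) ℝ)) = x⁻¹ • 1 :=
    invOf_eq_right_inv
      (by rw [Matrix.smul_mul, Matrix.one_mul, smul_smul, mul_inv_cancel₀ hx, one_smul])
  have hBBT : (bm a b c) * (bm a b c).transpose
      = Matrix.of (fun i i' : Fin (a+b+1) => if (i:ℕ) = a ∧ (i':ℕ) = a then (c:ℝ) else 0) := by
    ext i i'
    rw [Matrix.mul_apply]
    simp only [bm, Matrix.of_apply, Matrix.transpose_apply]
    by_cases h1 : (i:ℕ) = a <;> by_cases h2 : (i':ℕ) = a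
    · rw [if_pos (⟨h1, h2⟩ : (i:ℕ) = a ∧ (i':ℕ) = a)]
      simp [h1, h2, Finset.sum_const, Finset.card_univ]
    · rw [if_neg (fun hc : (i:ℕ) = a ∧ (i':ℕ) = a => h2 hc.2)]; simp [h2]
    · rw [if_neg (fun hc : (i:ℕ) = a ∧ (i':ℕ) = a => h1 hc.1)]; simp [h1]
    · rw [if_neg (fun hc : (i:ℕ) = a ∧ (i':ℕ) = a => h1 hc.1)]; simp [h1]
  have hschur : pmat x (a+b+1) - (bm a b c) * ⅟(x • (1 : Matrix (Fin c) (Fin c) ℝ)) * (bm a b c).transpose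
      = (pmat x (a+b+1)).updateRow (aFin a b)
          (pmat x (a+b+1) (aFin a b) + (-((c:ℝ)/x)) • (Pi.single (aFin a b) 1 : Fin (a+b+1) → ℝ)) := by
    rw [hinv, Matrix.mul_smul, Matrix.mul_one, Matrix.smul_mul, hBBT]
    ext i j
    by_cases hi : i = aFin a b
    · subst hi
      rw [Matrix.updateRow_self]
      simp only [Matrix.sub_apply, Matrix.smul_apply, Matrix.of_apply, Pi.add_apply,
        Pi.smul_apply, smul_eq_mul]
      have haa : ((aFin a b : Fin (a+b+1)) : ℕ) = a := rfl
      by_cases hj : j = aFin a b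
      · subst hj
        rw [if_pos (⟨haa, haa⟩ : ((aFin a b : Fin (a+b+1)) : ℕ) = a ∧ ((aFin a b : Fin (a+b+1)) : ℕ) = a), Pi.single_eq_same]
        ring
      · rw [if_neg (fun hc => hj (Fin.val_inj.mp (by rw [hc.2]; rfl))),
            Pi.single_eq_of_ne hj]
        ring
    · rw [Matrix.updateRow_ne hi]
      simp only [Matrix.sub_apply, Matrix.smul_apply, Matrix.of_apply]
      rw [if_neg (fun hc => hi (Fin.val_inj.mp (by rw [hc.1]; rfl)))]
      simp
  rw [hschur, Matrix.det_updateRow_add, Matrix.det_updateRow_smul,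
      Matrix.updateRow_eq_self, det_Q]
  have hdetD : (x • (1 : Matrix (Fin c) (Fin c) ℝ)).det = x^c := by
    rw [Matrix.det_smul, Matrix.det_one, Fintype.card_fin, mul_one]
  simp only [hdetD]
  simp only [p]
  ring

end CatAux

/-- For `ℓ ≥ r ≥ 1`, `k ≥ 1` and `x > 2`, `Φ(C(ℓ+1, r−1, k), x) > Φ(C(ℓ, r, k), x)`. -/
theorem stmt_6 (l r k : ℕ) (hr : 1 ≤ r) (hrl : r ≤ l) (hk : 1 ≤ k)
    (x : ℝ) (hx : 2 < x) :
    Phi (caterpillar l r k) x < Phi (caterpillar (l + 1) (r - 1) k) x := by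
  have hx0 : x ≠ 0 := by linarith
  rw [CatAux.phi_cat l r k x hx0, CatAux.phi_cat (l+1) (r-1) k x hx0]
  have hnr : l + 1 + (r-1) = l + r := by omega
  rw [hnr]
  have hd : CatAux.p x l * CatAux.p x r - CatAux.p x (l+1) * CatAux.p x (r-1)
      = CatAux.p x (l-r) := CatAux.p_prod r l hr hrl
  have hpd : 0 < CatAux.p x (l-r) := CatAux.p_pos hx _
  have hxk : 0 < x^k := pow_pos (by linarith) k
  have hkx : 0 < (k:ℝ) / x := div_pos (by exact_mod_cast Nat.cast_pos.mpr hk) (by linarith)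
  have key : x ^ k * (CatAux.p x (l+r+1) - (k:ℝ)/x * (CatAux.p x (l+1) * CatAux.p x (r-1)))
      - x ^ k * (CatAux.p x (l+r+1) - (k:ℝ)/x * (CatAux.p x l * CatAux.p x r))
      = x ^ k * ((k:ℝ)/x * CatAux.p x (l-r)) := by
    rw [← hd]; ring
  nlinarith [mul_pos hxk (mul_pos hkx hpd)]

end
end

section
/- Let G and G' be finite simple graphs on the same number n of vertices. If λ1(G') > λ2(G) and Φ(G', λ2(G)) > 0, then λ2(G') > λ2(G). -/
open Classical
attribute [local instance] Classical.propDecidable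

noncomputable section

lemma my_charpoly_eval_eq {V : Type*} [Fintype V] [DecidableEq V]
    (A : Matrix V V ℝ) (hA : A.IsHermitian) (t : ℝ) :
    A.charpoly.eval t = ∏ i, (t - hA.eigenvalues i) := by
  classical
  have h1 : A.charpoly.eval t = ((Matrix.charmatrix A).map (Polynomial.eval t)).det := by
    rw [Matrix.charpoly, ← Polynomial.coe_evalRingHom, RingHom.map_det]; rfl
  have h2 : (Matrix.charmatrix A).map (Polynomial.eval t)
      = Matrix.diagonal (fun _ : V => t) - A := by
    ext i j
    by_cases h : i = j <;> simp [Matrix.charmatrix_apply, h, Matrix.diagonal]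
  set U : Matrix V V ℝ := (hA.eigenvectorUnitary : Matrix V V ℝ) with hU
  have hUU : U * star U = 1 := (Matrix.mem_unitaryGroup_iff).mp (hA.eigenvectorUnitary).2
  have hUU' : star U * U = 1 := (Matrix.mem_unitaryGroup_iff').mp (hA.eigenvectorUnitary).2
  have hsc : (Matrix.diagonal fun _ : V => t) = t • (1 : Matrix V V ℝ) := by
    rw [Matrix.smul_eq_diagonal_mul]; simp
  have h3 : Matrix.diagonal (fun _ : V => t) - A
      = U * (Matrix.diagonal (fun i => t - hA.eigenvalues i)) * star U := by
    have hsp := hA.spectral_theorem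
    have hd : (Matrix.diagonal (fun i => t - hA.eigenvalues i) : Matrix V V ℝ)
        = Matrix.diagonal (fun _ : V => t)
          - Matrix.diagonal (RCLike.ofReal ∘ hA.eigenvalues) := by
      rw [Matrix.diagonal_sub]; rfl
    rw [Unitary.conjStarAlgAut_apply] at hsp
    rw [hd, Matrix.mul_sub, Matrix.sub_mul, ← hsp]
    congr 1
    rw [hsc, Matrix.mul_smul, Matrix.mul_one, Matrix.smul_mul, hUU]
  rw [h1, h2, h3, Matrix.det_mul, Matrix.det_mul]
  have h4 : U.det * (Matrix.diagonal fun i => t - hA.eigenvalues i).det * (star U).det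
      = (Matrix.diagonal fun i => t - hA.eigenvalues i).det * (star U * U).det := by
    rw [Matrix.det_mul]; ring
  rw [h4, hUU', Matrix.det_one, mul_one, Matrix.det_diagonal]

lemma my_Phi_eq {V : Type*} [Fintype V] [DecidableEq V] (G : SimpleGraph V) (t : ℝ) :
    Phi G t = ((eigList G).map (fun μ => t - μ)).prod := by
  classical
  have hA : (G.adjMatrix ℝ).IsHermitian := by
    rw [Matrix.IsHermitian]
    ext i j
    simp [Matrix.conjTranspose_apply, G.adj_comm j i]
  have hL : ((eigList G : List ℝ) : Multiset ℝ) = Finset.univ.val.map hA.eigenvalues := by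
    rw [eigList, Multiset.sort_eq]
  rw [Phi, my_charpoly_eval_eq _ hA]
  have h1 : (((eigList G).map (fun μ => t - μ) : List ℝ) : Multiset ℝ).prod
      = ((eigList G).map (fun μ => t - μ)).prod := Multiset.prod_coe _
  rw [← h1, ← Multiset.map_coe, hL, Multiset.map_map, Finset.prod_eq_multiset_prod]
  rfl

lemma eigList_length {V : Type*} [Fintype V] [DecidableEq V] (G : SimpleGraph V) :
    (eigList G).length = Fintype.card V := by
  rw [eigList]
  rw [Multiset.length_sort, Multiset.card_map]
  rfl

lemma eigList_sorted {V : Type*} [Fintype V] [DecidableEq V] (G : SimpleGraph V) :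
    (eigList G).Pairwise (· ≤ ·) := Multiset.pairwise_sort _ _

/-- If `λ₁(G') > λ₂(G)` and `Φ(G', λ₂(G)) > 0` for graphs on the same `n` vertices,
then `λ₂(G') > λ₂(G)`. -/
theorem stmt_10 {n : ℕ} (G G' : SimpleGraph (Fin n))
    (h1 : lam G 2 < lam G' 1) (h2 : 0 < Phi G' (lam G 2)) :
    lam G 2 < lam G' 2 := by
  classical
  set t := lam G 2 with ht
  by_contra hcon
  push_neg at hcon
  set L := eigList G' with hLdef
  have hlen : L.length = n := by rw [hLdef, eigList_length, Fintype.card_fin]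
  have hsort : L.Pairwise (· ≤ ·) := eigList_sorted G'
  rcases Nat.eq_zero_or_pos n with h0 | hn
  · subst h0
    have hGnil : eigList G = [] := List.eq_nil_of_length_eq_zero (by
      rw [eigList_length, Fintype.card_fin])
    have hG'nil : eigList G' = [] := List.eq_nil_of_length_eq_zero (by
      rw [eigList_length, Fintype.card_fin])
    rw [ht] at h1
    simp only [lam, hGnil, hG'nil, List.getD] at h1
    simp at h1
  rcases eq_or_lt_of_le (Nat.succ_le_of_lt hn) with h1n | h2n
  · -- n = 1
    have hn1 : n = 1 := h1n.symm
    have : lam G' 2 = lam G' 1 := by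
      simp only [lam, Fintype.card_fin, hn1]
    rw [this] at hcon
    exact absurd h1 (not_lt.mpr hcon)
  · -- n ≥ 2
    have hn2 : 2 ≤ n := h2n
    have hne : L ≠ [] := by
      intro h; rw [h] at hlen; simp at hlen; omega
    have hn1lt : n - 1 < L.length := by omega
    have hn2lt : n - 2 < L.length := by omega
    -- identify lam G' 1 and lam G' 2 with entries of L
    have hlam1 : lam G' 1 = L.get ⟨n - 1, hn1lt⟩ := by
      rw [lam, Fintype.card_fin, ← hLdef]; exact List.getD_eq_getElem L 0 hn1lt
    have hlam2 : lam G' 2 = L.get ⟨n - 2, hn2lt⟩ := by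
      rw [lam, Fintype.card_fin, ← hLdef]; exact List.getD_eq_getElem L 0 hn2lt
    -- last element is lam G' 1
    have hlast : L.getLast hne = L.get ⟨n - 1, hn1lt⟩ := by
      rw [List.getLast_eq_getElem]
      congr 1
      simp [hlen]
    -- every element of dropLast is ≤ t
    have hdrop : ∀ x ∈ L.dropLast, x ≤ t := by
      intro x hx
      obtain ⟨i, hi⟩ := List.mem_iff_get.mp hx
      have hil : (i : ℕ) < L.length - 1 := by
        have := i.isLt
        simpa using this
      have hxle : x ≤ L.get ⟨n - 2, hn2lt⟩ := by
        rw [← hi]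
        have hget : L.dropLast.get i = L.get ⟨(i : ℕ), by omega⟩ :=
          List.getElem_dropLast i.isLt
        rw [hget]
        rcases eq_or_lt_of_le (by omega : (i : ℕ) ≤ n - 2) with heq | hlt
        · exact le_of_eq (by congr 1; exact Fin.ext heq)
        · exact List.pairwise_iff_get.mp hsort ⟨(i : ℕ), by omega⟩ ⟨n - 2, hn2lt⟩ hlt
      calc x ≤ L.get ⟨n - 2, hn2lt⟩ := hxle
        _ = lam G' 2 := hlam2.symm
        _ ≤ t := hcon
    -- product factorization
    have hPhi : Phi G' t = (L.dropLast.map (fun μ => t - μ)).prod * (t - L.getLast hne) := by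
      rw [my_Phi_eq, ← hLdef]
      conv_lhs => rw [← List.dropLast_append_getLast hne]
      rw [List.map_append, List.prod_append]
      simp
    have hneg : t - L.getLast hne < 0 := by
      rw [hlast, ← hlam1]
      linarith
    have hnonneg : 0 ≤ (L.dropLast.map (fun μ => t - μ)).prod := by
      apply List.prod_nonneg
      intro y hy
      obtain ⟨x, hx, rfl⟩ := List.mem_map.mp hy
      have := hdrop x hx
      linarith
    have : Phi G' t ≤ 0 := by
      rw [hPhi]
      exact mul_nonpos_of_nonneg_of_nonpos hnonneg (le_of_lt hneg)
    linarith

end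
end
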